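/- Let A ⊆ F_p be sum-free with density α > 0. Let δ₁α = |Â(r₁)| be the largest nonzero Fourier coefficient magnitude and δ₂α the second largest (over the pairs {r,−r}). If 1 + δ₂ + 2δ₁²δ₂ − 2δ₁³ > 0, then α ≤ δ₂ / (1 + δ₂ + 2δ₁²δ₂ − 2δ₁³). -/

import Mathlib

set_option maxHeartbeats 1000000
open Finset

/-- The Fourier coefficient of the indicator function of `A` at `r`. -/
noncomputable def ft {p : ℕ} [NeZero p] (A : Finset (ZMod p)) (r : ZMod p) : ℂ :=
  (p : ℂ)⁻¹ * ∑ x : ZMod p,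
    if x ∈ A then Complex.exp (-(2 * Real.pi * Complex.I * ((r * x).val : ℕ) / p)) else 0

namespace FtAux
open Complex ZMod
variable {p : ℕ} [NeZero p]

lemma char_ortho (t : ZMod p) :
    ∑ i : ZMod p, stdAddChar (t * i) = if t = 0 then (p : ℂ) else 0 := by
  split_ifs with h
  · simp only [h, zero_mul, AddChar.map_zero_eq_one, Finset.sum_const, Finset.card_univ,
      ZMod.card, nsmul_eq_mul, mul_one]
  · exact AddChar.sum_eq_zero_of_ne_one (ZMod.isPrimitive_stdAddChar p h)

lemma char_ortho' (t : ZMod p) :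
    ∑ i : ZMod p, stdAddChar (i * t) = if t = 0 then (p : ℂ) else 0 := by
  rw [← char_ortho t]
  exact Finset.sum_congr rfl fun i _ => by rw [mul_comm]

lemma char_val (z : ZMod p) :
    stdAddChar z = Complex.exp (2 * Real.pi * Complex.I * (z.val : ℕ) / p) := by
  rw [ZMod.stdAddChar_apply, ZMod.toCircle_apply]

lemma char_abs (z : ZMod p) : ‖(stdAddChar z : ℂ)‖ = 1 := by
  rw [ZMod.stdAddChar_apply]; exact Circle.norm_coe _

lemma char_conj (z : ZMod p) : starRingEnd ℂ (stdAddChar z) = stdAddChar (-z) := by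
  rw [AddChar.map_neg_eq_inv, ← Complex.inv_eq_conj (char_abs z)]

lemma ft_eq (A : Finset (ZMod p)) (r : ZMod p) :
    ft A r = (p : ℂ)⁻¹ * ∑ x ∈ A, stdAddChar (-(r * x)) := by
  unfold ft
  congr 1
  rw [Finset.sum_ite_mem, Finset.univ_inter]
  refine Finset.sum_congr rfl fun x _ => ?_
  rw [AddChar.map_neg_eq_inv, char_val, ← Complex.exp_neg]

lemma ft_neg (A : Finset (ZMod p)) (r : ZMod p) :
    ft A (-r) = starRingEnd ℂ (ft A r) := by
  rw [ft_eq, ft_eq, map_mul, map_sum]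
  congr 1
  · rw [← Complex.ofReal_natCast, Complex.conj_inv, Complex.conj_ofReal]
  · exact Finset.sum_congr rfl fun x _ => by rw [char_conj]; ring_nf

lemma ft_abs_neg (A : Finset (ZMod p)) (r : ZMod p) :
    ‖ft A (-r)‖ = ‖ft A r‖ := by
  rw [ft_neg, Complex.norm_conj]

lemma ft_zero (A : Finset (ZMod p)) : ft A 0 = (A.card : ℂ) / p := by
  rw [ft_eq]
  simp only [zero_mul, neg_zero, AddChar.map_zero_eq_one, Finset.sum_const, nsmul_eq_mul,
    mul_one]
  ring

end FtAux

namespace FtAux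
open Complex ZMod
variable {p : ℕ} [NeZero p]

lemma sumfree_sum (A : Finset (ZMod p)) (hsf : ∀ a ∈ A, ∀ b ∈ A, a + b ∉ A) :
    ∑ r : ZMod p, ft A r ^ 2 * ft A (-r) = 0 := by
  have expand : ∀ r : ZMod p, ft A r ^ 2 * ft A (-r)
      = (p : ℂ)⁻¹ ^ 3 * ∑ a ∈ A, ∑ b ∈ A, ∑ c ∈ A, stdAddChar (r * (c - a - b)) := by
    intro r
    rw [ft_eq, ft_eq]
    have h1 : ∀ S T : ℂ, ((p:ℂ)⁻¹ * S) ^ 2 * ((p:ℂ)⁻¹ * T) = (p:ℂ)⁻¹ ^ 3 * (S * S * T) := by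
      intros; ring
    rw [h1]
    congr 1
    rw [Finset.sum_mul_sum, Finset.sum_mul]
    refine Finset.sum_congr rfl fun a _ => ?_
    rw [Finset.sum_mul]
    refine Finset.sum_congr rfl fun b _ => ?_
    rw [Finset.mul_sum]
    refine Finset.sum_congr rfl fun c _ => ?_
    rw [← AddChar.map_add_eq_mul, ← AddChar.map_add_eq_mul]
    congr 1; ring
  calc ∑ r : ZMod p, ft A r ^ 2 * ft A (-r)
      = (p : ℂ)⁻¹ ^ 3 * ∑ r : ZMod p, ∑ a ∈ A, ∑ b ∈ A, ∑ c ∈ A,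
          stdAddChar (r * (c - a - b)) := by
        rw [Finset.mul_sum]; exact Finset.sum_congr rfl fun r _ => expand r
    _ = (p : ℂ)⁻¹ ^ 3 * ∑ a ∈ A, ∑ b ∈ A, ∑ c ∈ A, ∑ r : ZMod p,
          stdAddChar (r * (c - a - b)) := by
        congr 1
        rw [Finset.sum_comm]
        refine Finset.sum_congr rfl fun a _ => ?_
        rw [Finset.sum_comm]
        refine Finset.sum_congr rfl fun b _ => ?_
        rw [Finset.sum_comm]
    _ = 0 := by
        rw [mul_eq_zero]; right
        refine Finset.sum_eq_zero fun a ha => Finset.sum_eq_zero fun b hb =>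
          Finset.sum_eq_zero fun c hc => ?_
        rw [char_ortho', if_neg]
        intro h
        rw [sub_sub, sub_eq_zero] at h
        exact hsf a ha b hb (h ▸ hc)

lemma parseval_sum (A : Finset (ZMod p)) :
    ∑ r : ZMod p, ft A r * ft A (-r) = (A.card : ℂ) / p := by
  have expand : ∀ r : ZMod p, ft A r * ft A (-r)
      = (p : ℂ)⁻¹ ^ 2 * ∑ a ∈ A, ∑ b ∈ A, stdAddChar (r * (b - a)) := by
    intro r
    rw [ft_eq, ft_eq]
    have h1 : ∀ S T : ℂ, ((p:ℂ)⁻¹ * S) * ((p:ℂ)⁻¹ * T) = (p:ℂ)⁻¹ ^ 2 * (S * T) := by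
      intros; ring
    rw [h1]
    congr 1
    rw [Finset.sum_mul]
    refine Finset.sum_congr rfl fun a _ => ?_
    rw [Finset.mul_sum]
    refine Finset.sum_congr rfl fun b _ => ?_
    rw [← AddChar.map_add_eq_mul]
    congr 1; ring
  have hp : (p : ℂ) ≠ 0 := Nat.cast_ne_zero.mpr (NeZero.ne p)
  calc ∑ r : ZMod p, ft A r * ft A (-r)
      = (p : ℂ)⁻¹ ^ 2 * ∑ r : ZMod p, ∑ a ∈ A, ∑ b ∈ A, stdAddChar (r * (b - a)) := by
        rw [Finset.mul_sum]; exact Finset.sum_congr rfl fun r _ => expand r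
    _ = (p : ℂ)⁻¹ ^ 2 * ∑ a ∈ A, ∑ b ∈ A, ∑ r : ZMod p, stdAddChar (r * (b - a)) := by
        congr 1
        rw [Finset.sum_comm]
        refine Finset.sum_congr rfl fun a _ => ?_
        rw [Finset.sum_comm]
    _ = (p : ℂ)⁻¹ ^ 2 * ∑ a ∈ A, (p : ℂ) := by
        congr 1
        refine Finset.sum_congr rfl fun a ha => ?_
        have : ∀ b ∈ A, ∑ r : ZMod p, stdAddChar (r * (b - a))
            = if b = a then (p : ℂ) else 0 := by
          intro b _
          rw [char_ortho']
          simp [sub_eq_zero]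
        rw [Finset.sum_congr rfl this, Finset.sum_ite_eq' A a (fun _ => (p : ℂ)), if_pos ha]
    _ = (A.card : ℂ) / p := by
        rw [Finset.sum_const, nsmul_eq_mul]
        field_simp

end FtAux

theorem stmt4 {p : ℕ} [Fact p.Prime] (hodd : Odd p) (A : Finset (ZMod p))
    (hsf : ∀ a ∈ A, ∀ b ∈ A, a + b ∉ A)
    (α δ₁ δ₂ : ℝ) (hα : α = (A.card : ℝ) / p) (hαpos : 0 < α)
    (r₁ : ZMod p) (hr₁ : r₁ ≠ 0)
    (h1 : ‖ft A r₁‖ = δ₁ * α)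
    (hub1 : ∀ r : ZMod p, r ≠ 0 → ‖ft A r‖ ≤ δ₁ * α)
    (hub2 : ∀ r : ZMod p, r ≠ 0 → r ≠ r₁ → r ≠ -r₁ → ‖ft A r‖ ≤ δ₂ * α)
    (hex2 : ∃ r : ZMod p, r ≠ 0 ∧ r ≠ r₁ ∧ r ≠ -r₁ ∧ ‖ft A r‖ = δ₂ * α)
    (hpos : 0 < 1 + δ₂ + 2 * δ₁ ^ 2 * δ₂ - 2 * δ₁ ^ 3) :
    α ≤ δ₂ / (1 + δ₂ + 2 * δ₁ ^ 2 * δ₂ - 2 * δ₁ ^ 3) := by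
  classical
  set f : ZMod p → ℝ := fun r => ‖ft A r‖ with hf
  have hfnonneg : ∀ r, 0 ≤ f r := fun r => norm_nonneg _
  -- |ft A 0| = α
  have hα0 : f 0 = α := by
    rw [hf]
    simp only [FtAux.ft_zero, norm_div, Complex.norm_natCast, hα]
  -- δ₂ ≥ 0
  obtain ⟨r₂, hr₂0, hr₂1, hr₂2, h2⟩ := hex2
  have hδ₂nonneg : 0 ≤ δ₂ := by
    have := norm_nonneg (ft A r₂)
    rw [h2] at this
    nlinarith
  -- r₁ ≠ -r₁
  have hne : -r₁ ≠ r₁ := by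
    intro h
    have h2r : (2 : ZMod p) * r₁ = 0 := by linear_combination -h
    have h2ne : (2 : ZMod p) ≠ 0 := by
      have hp2 : p ≠ 2 := by
        rintro rfl
        simp [Nat.odd_iff] at hodd
      intro hz
      have : ((2 : ℕ) : ZMod p) = 0 := by exact_mod_cast hz
      rw [ZMod.natCast_eq_zero_iff] at this
      exact hp2 ((Nat.prime_dvd_prime_iff_eq (Fact.out) Nat.prime_two).mp this)
    rcases mul_eq_zero.mp h2r with h' | h'
    · exact h2ne h'
    · exact hr₁ h'
  have hnr₁0 : -r₁ ≠ 0 := neg_ne_zero.mpr hr₁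
  have hfr₁ : f r₁ = δ₁ * α := h1
  have hfnr₁ : f (-r₁) = δ₁ * α := by rw [hf]; simp only [FtAux.ft_abs_neg]; exact h1
  -- the three nested erase sets
  set s₀ : Finset (ZMod p) := Finset.univ.erase 0 with hs₀
  set s₁ : Finset (ZMod p) := s₀.erase r₁ with hs₁
  set s₂ : Finset (ZMod p) := s₁.erase (-r₁) with hs₂
  have hmem₁ : r₁ ∈ s₀ := Finset.mem_erase.mpr ⟨hr₁, Finset.mem_univ _⟩
  have hmem₂ : -r₁ ∈ s₁ := Finset.mem_erase.mpr ⟨hne, Finset.mem_erase.mpr ⟨hnr₁0, Finset.mem_univ _⟩⟩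
  -- Part 1: α ^ 3 ≤ ∑ r ∈ s₀, f r ^ 3
  have key1 : α ^ 3 ≤ ∑ r ∈ s₀, f r ^ 3 := by
    have hsplit : ft A 0 ^ 2 * ft A (-0) + ∑ r ∈ s₀, ft A r ^ 2 * ft A (-r) = 0 := by
      rw [← FtAux.sumfree_sum A hsf]
      exact Finset.add_sum_erase _ (fun r => ft A r ^ 2 * ft A (-r))
        (Finset.mem_univ (0 : ZMod p))
    have h0 : ft A 0 ^ 2 * ft A (-0) = -∑ r ∈ s₀, ft A r ^ 2 * ft A (-r) := by
      linear_combination hsplit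
    have habs : α ^ 3 = ‖∑ r ∈ s₀, ft A r ^ 2 * ft A (-r)‖ := by
      rw [show ‖∑ r ∈ s₀, ft A r ^ 2 * ft A (-r)‖
            = ‖-∑ r ∈ s₀, ft A r ^ 2 * ft A (-r)‖ from
          (norm_neg _).symm, ← h0, norm_mul, norm_pow, neg_zero]
      rw [show ‖ft A 0‖ = α from hα0]
      ring
    rw [habs]
    refine le_trans (norm_sum_le _ _) ?_
    refine le_of_eq (Finset.sum_congr rfl fun r _ => ?_)
    rw [norm_mul, norm_pow, FtAux.ft_abs_neg]
    ring
  -- Part 2: Parseval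
  have key2 : ∑ r : ZMod p, f r ^ 2 = α := by
    have hpar := FtAux.parseval_sum A
    have hterm : ∀ r : ZMod p, ft A r * ft A (-r) = ((f r ^ 2 : ℝ) : ℂ) := by
      intro r
      rw [FtAux.ft_neg, Complex.mul_conj, hf]
      norm_cast
      rw [Complex.sq_norm]
    rw [Finset.sum_congr rfl (fun r _ => hterm r)] at hpar
    push_cast at hpar
    have : ((∑ r : ZMod p, f r ^ 2 : ℝ) : ℂ) = ((α : ℝ) : ℂ) := by
      push_cast
      rw [hpar, hα]
      push_cast
      ring
    exact_mod_cast this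
  -- decompose Parseval
  have hdec : α = α ^ 2 + (δ₁ * α) ^ 2 + (δ₁ * α) ^ 2 + ∑ r ∈ s₂, f r ^ 2 := by
    have e0 : ∑ r : ZMod p, f r ^ 2 = f 0 ^ 2 + ∑ r ∈ s₀, f r ^ 2 :=
      (Finset.add_sum_erase _ _ (Finset.mem_univ 0)).symm
    have e1 : ∑ r ∈ s₀, f r ^ 2 = f r₁ ^ 2 + ∑ r ∈ s₁, f r ^ 2 :=
      (Finset.add_sum_erase _ _ hmem₁).symm
    have e2 : ∑ r ∈ s₁, f r ^ 2 = f (-r₁) ^ 2 + ∑ r ∈ s₂, f r ^ 2 :=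
      (Finset.add_sum_erase _ _ hmem₂).symm
    have hstep : α = f 0 ^ 2 + (f r₁ ^ 2 + (f (-r₁) ^ 2 + ∑ r ∈ s₂, f r ^ 2)) := by
      rw [← key2, e0, e1, e2]
    rw [hα0, hfr₁, hfnr₁] at hstep
    linarith [hstep]
  -- bound the cube sum
  have key3 : ∑ r ∈ s₀, f r ^ 3 ≤ 2 * (δ₁ * α) ^ 3 + δ₂ * α * ∑ r ∈ s₂, f r ^ 2 := by
    have e1 : ∑ r ∈ s₀, f r ^ 3 = f r₁ ^ 3 + ∑ r ∈ s₁, f r ^ 3 :=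
      (Finset.add_sum_erase _ _ hmem₁).symm
    have e2 : ∑ r ∈ s₁, f r ^ 3 = f (-r₁) ^ 3 + ∑ r ∈ s₂, f r ^ 3 :=
      (Finset.add_sum_erase _ _ hmem₂).symm
    have hbound : ∑ r ∈ s₂, f r ^ 3 ≤ δ₂ * α * ∑ r ∈ s₂, f r ^ 2 := by
      rw [Finset.mul_sum]
      refine Finset.sum_le_sum fun r hr => ?_
      have hmem := hr
      rw [hs₂, Finset.mem_erase, hs₁, Finset.mem_erase, hs₀, Finset.mem_erase] at hmem
      obtain ⟨hrn, hrr, hr0, _⟩ := hmem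
      have hle : f r ≤ δ₂ * α := hub2 r hr0 hrr hrn
      calc f r ^ 3 = f r * f r ^ 2 := by ring
        _ ≤ δ₂ * α * f r ^ 2 := by
            exact mul_le_mul_of_nonneg_right hle (sq_nonneg _)
    rw [e1, e2, hfr₁, hfnr₁]
    nlinarith [hbound]
  -- combine
  have key : α ^ 3 ≤ 2 * (δ₁ * α) ^ 3 + δ₂ * α * (α - α ^ 2 - 2 * (δ₁ * α) ^ 2) := by
    have hs2 : ∑ r ∈ s₂, f r ^ 2 = α - α ^ 2 - 2 * (δ₁ * α) ^ 2 := by linarith [hdec]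
    calc α ^ 3 ≤ ∑ r ∈ s₀, f r ^ 3 := key1
      _ ≤ 2 * (δ₁ * α) ^ 3 + δ₂ * α * ∑ r ∈ s₂, f r ^ 2 := key3
      _ = _ := by rw [hs2]
  rw [le_div_iff₀ hpos]
  nlinarith [key, mul_pos hαpos hαpos, hαpos]
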